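/- Let H be a real Hilbert space and B a bounded, self-adjoint, positive linear operator on H. Let γ > 0 be such that γ·⟨Bx, x⟩ ≤ ‖Bx‖² for all x ∈ H, let μ ∈ (0, 1/2), and let φ : H → [0,∞). Let y : [0,∞) → H be differentiable and f : [0,∞) → H be such that for all t > 0: y'(t) = f(t) + u(t)·B(y(t)), where ⟨f(t), B(y(t))⟩ ≤ φ(y(t))·‖B(y(t))‖², and u(t) = −(⟨B(y(t)), y(t)⟩^{−μ} + φ(y(t))) if B(y(t)) ≠ 0 and u(t) = 0 if B(y(t)) = 0. Then, setting T₁ := ⟨B(y(0)), y(0)⟩^μ/(2γμ), one has ⟨B(y(t)), y(t)⟩^μ ≤ ⟨B(y(0)), y(0)⟩^μ − 2γμ·t for all t ∈ [0, T₁], and B(y(t)) = 0 for all t ≥ T₁. -/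

import Mathlib

open RealInnerProductSpace

/-- Trajectory-level core of Theorem 3.2: along a trajectory of
`y' = f + u·By` with the feedback `u = -(⟨By,y⟩^(-μ) + φ(y))` (switched off when `By = 0`),
under the observation condition `γ⟨Bx,x⟩ ≤ ‖Bx‖²` and the dissipation-type condition
`⟨f, By⟩ ≤ φ(y)‖By‖²`, the quantity `⟨By(t), y(t)⟩^μ` decays linearly and `B y(t) = 0`
after time `T₁ = ⟨By(0), y(0)⟩^μ/(2γμ)`. -/
theorem feedback_drives_output_to_zero
    {H : Type*} [NormedAddCommGroup H] [InnerProductSpace ℝ H] [CompleteSpace H]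
    (B : H →L[ℝ] H)
    (hBsa : ∀ x y : H, ⟪B x, y⟫ = ⟪x, B y⟫)
    (hBpos : ∀ x : H, 0 ≤ ⟪B x, x⟫)
    (γ : ℝ) (hγ : 0 < γ)
    (hγB : ∀ x : H, γ * ⟪B x, x⟫ ≤ ‖B x‖ ^ 2)
    (μ : ℝ) (hμ : μ ∈ Set.Ioo (0:ℝ) (1/2))
    (φ : H → ℝ) (hφ : ∀ z : H, 0 ≤ φ z)
    (y : ℝ → H) (f : ℝ → H) (u : ℝ → ℝ)
    (hycont : ContinuousOn y (Set.Ici 0))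
    (hyderiv : ∀ t > (0:ℝ), HasDerivAt y (f t + u t • B (y t)) t)
    (hf : ∀ t > (0:ℝ), ⟪f t, B (y t)⟫ ≤ φ (y t) * ‖B (y t)‖ ^ 2)
    (hu : ∀ t : ℝ, B (y t) ≠ 0 →
      u t = -(((⟪B (y t), y t⟫ : ℝ) ^ (-μ)) + φ (y t)))
    (hu0 : ∀ t : ℝ, B (y t) = 0 → u t = 0) :
    (∀ t : ℝ, 0 ≤ t → t ≤ (⟪B (y 0), y 0⟫ : ℝ) ^ μ / (2 * γ * μ) →
      (⟪B (y t), y t⟫ : ℝ) ^ μ ≤ (⟪B (y 0), y 0⟫ : ℝ) ^ μ - 2 * γ * μ * t) ∧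
    (∀ t ≥ (⟪B (y 0), y 0⟫ : ℝ) ^ μ / (2 * γ * μ), B (y t) = 0) := by
  obtain ⟨hμ0, hμ2⟩ := hμ
  set V : ℝ → ℝ := fun t => (⟪B (y t), y t⟫ : ℝ) with hVdef
  -- Key: ⟪Bx, x⟫ = 0 → Bx = 0
  have key : ∀ x : H, (⟪B x, x⟫ : ℝ) = 0 → B x = 0 := by
    intro x hx
    set z := B x with hz
    have hc : (0:ℝ) ≤ ⟪B z, z⟫ := hBpos z
    have hq : ∀ s : ℝ, 0 ≤ (⟪B z, z⟫ : ℝ) * (s * s) + (2 * ‖z‖ ^ 2) * s + 0 := by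
      intro s
      have h0 := hBpos (x + s • z)
      have hexp : (⟪B (x + s • z), x + s • z⟫ : ℝ)
          = ⟪B x, x⟫ + 2 * s * ⟪B x, z⟫ + s * s * ⟪B z, z⟫ := by
        have hcross : (⟪B z, x⟫ : ℝ) = ⟪B x, z⟫ := by
          rw [hBsa z x, real_inner_comm]
        simp only [map_add, map_smul, inner_add_left, inner_add_right,
          real_inner_smul_left, real_inner_smul_right, hcross]
        ring
      have hself : (⟪B x, z⟫ : ℝ) = ‖z‖ ^ 2 := by
        rw [hz, real_inner_self_eq_norm_sq]
      rw [hexp, hx, hself] at h0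
      linarith
    have hd := discrim_le_zero hq
    have : (2 * ‖z‖ ^ 2) ^ 2 ≤ 0 := by
      simpa [discrim] using hd
    have hzn : ‖z‖ ^ 2 = 0 := by nlinarith [sq_nonneg (‖z‖ ^ 2)]
    have : ‖z‖ = 0 := by
      have := sq_eq_zero_iff.mp hzn
      exact this
    exact norm_eq_zero.mp this
  have hVnonneg : ∀ t : ℝ, 0 ≤ V t := fun t => hBpos (y t)
  have hVzero : ∀ t : ℝ, B (y t) = 0 → V t = 0 := by
    intro t h
    simp [hVdef, h]
  have hVpos' : ∀ t : ℝ, B (y t) ≠ 0 → 0 < V t := by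
    intro t h
    rcases (hVnonneg t).lt_or_eq with h' | h'
    · exact h'
    · exact absurd (key (y t) h'.symm) h
  -- derivative of V
  have hVderiv : ∀ t > (0:ℝ),
      HasDerivAt V (2 * ((⟪f t, B (y t)⟫ : ℝ) + u t * ‖B (y t)‖ ^ 2)) t := by
    intro t ht
    have hy' := hyderiv t ht
    have hBy' : HasDerivAt (fun s => B (y s)) (B (f t + u t • B (y t))) t :=
      (B.hasFDerivAt.comp_hasDerivAt t hy')
    have h := hBy'.inner ℝ hy'
    convert h using 1
    case e'_4 => rfl
    case e'_5 => rfl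
    have h1 : (⟪B (f t + u t • B (y t)), y t⟫ : ℝ) = ⟪f t + u t • B (y t), B (y t)⟫ :=
      hBsa _ _
    have h2 : (⟪B (y t), f t + u t • B (y t)⟫ : ℝ) = ⟪f t + u t • B (y t), B (y t)⟫ :=
      real_inner_comm _ _
    rw [h2, h1]
    rw [inner_add_left, real_inner_smul_left, real_inner_self_eq_norm_sq]
    ring
  -- the derivative is nonpositive
  have hD : ∀ t > (0:ℝ), 2 * ((⟪f t, B (y t)⟫ : ℝ) + u t * ‖B (y t)‖ ^ 2) ≤ 0 := by
    intro t ht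
    by_cases hB : B (y t) = 0
    · simp [hB]
    · have hut := hu t hB
      have hft := hf t ht
      have hVp := hVpos' t hB
      have hrp : 0 ≤ V t ^ (-μ) := Real.rpow_nonneg (hVnonneg t) _
      have hn : 0 ≤ ‖B (y t)‖ ^ 2 := sq_nonneg _
      rw [hut]
      nlinarith [mul_nonneg hrp hn]
  -- V continuous on [0, ∞)
  have hVcont : ContinuousOn V (Set.Ici 0) :=
    (B.continuous.comp_continuousOn hycont).inner hycont
  -- V antitone on [0, ∞)
  have hanti : AntitoneOn V (Set.Ici 0) := by
    apply antitoneOn_of_deriv_nonpos (convex_Ici 0) hVcont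
    · intro t ht
      rw [interior_Ici] at ht
      exact (hVderiv t ht).differentiableAt.differentiableWithinAt
    · intro t ht
      rw [interior_Ici] at ht
      rw [(hVderiv t ht).deriv]
      exact hD t ht
  have h2γμ : (0:ℝ) < 2 * γ * μ := by positivity
  have part1 : ∀ t : ℝ, 0 ≤ t → t ≤ V 0 ^ μ / (2 * γ * μ) →
      V t ^ μ ≤ V 0 ^ μ - 2 * γ * μ * t := by
    intro t ht0 htT
    rcases (hVnonneg t).lt_or_eq with hpos | h0
    · -- V t > 0
      rcases ht0.lt_or_eq with ht0' | rfl
      swap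
      · simp [le_refl]
      have hVposIcc : ∀ s ∈ Set.Icc (0:ℝ) t, 0 < V s := by
        intro s hs
        exact lt_of_lt_of_le hpos (hanti (Set.mem_Ici.mpr hs.1) (Set.mem_Ici.mpr ht0) hs.2)
      -- g s = V s ^ μ + 2γμ s is antitone on [0, t]
      have hg : AntitoneOn (fun s => V s ^ μ + 2 * γ * μ * s) (Set.Icc 0 t) := by
        apply antitoneOn_of_deriv_nonpos (convex_Icc 0 t)
        · exact ((hVcont.mono (Set.Icc_subset_Ici_self)).rpow_const
            (fun x _ => Or.inr hμ0.le)).add (continuous_const.mul continuous_id).continuousOn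
        · intro s hs
          rw [interior_Icc] at hs
          have hVs := hVposIcc s ⟨hs.1.le, hs.2.le⟩
          exact (((hVderiv s hs.1).rpow_const (p := μ) (Or.inl hVs.ne')).add
            ((hasDerivAt_id s).const_mul (2 * γ * μ))).differentiableAt.differentiableWithinAt
        · intro s hs
          rw [interior_Icc] at hs
          have hVs := hVposIcc s ⟨hs.1.le, hs.2.le⟩
          have hBne : B (y s) ≠ 0 := by
            intro h; exact absurd (hVzero s h) hVs.ne'
          have hder := ((hVderiv s hs.1).rpow_const (p := μ) (Or.inl hVs.ne')).add
            ((hasDerivAt_id s).const_mul (2 * γ * μ))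
          have hder2 : HasDerivAt (fun s : ℝ => V s ^ μ + 2 * γ * μ * s)
              (2 * ((⟪f s, B (y s)⟫ : ℝ) + u s * ‖B (y s)‖ ^ 2) * μ * V s ^ (μ - 1)
                + 2 * γ * μ * 1) s := hder
          rw [hder2.deriv]
          -- bound the derivative
          set D := 2 * ((⟪f s, B (y s)⟫ : ℝ) + u s * ‖B (y s)‖ ^ 2) with hDdef
          have hD1 : D ≤ -2 * V s ^ (-μ) * ‖B (y s)‖ ^ 2 := by
            have hut := hu s hBne
            have hft := hf s hs.1
            rw [hDdef, hut]
            nlinarith [sq_nonneg ‖B (y s)‖]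
          have hD2 : -2 * V s ^ (-μ) * ‖B (y s)‖ ^ 2 ≤ -2 * V s ^ (-μ) * (γ * V s) := by
            apply mul_le_mul_of_nonpos_left (hγB (y s))
            have : 0 ≤ V s ^ (-μ) := Real.rpow_nonneg (hVnonneg s) _
            nlinarith
          have hD3 : -2 * V s ^ (-μ) * (γ * V s) = -2 * γ * V s ^ (1 - μ) := by
            have : V s ^ (1 - μ) = V s ^ (-μ) * V s := by
              rw [show (1:ℝ) - μ = -μ + 1 by ring, Real.rpow_add hVs, Real.rpow_one]
            rw [this]; ring
          have hDle : D ≤ -2 * γ * V s ^ (1 - μ) := by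
            rw [← hD3]; exact hD1.trans hD2
          have hpow : 0 ≤ μ * V s ^ (μ - 1) :=
            mul_nonneg hμ0.le (Real.rpow_nonneg (hVnonneg s) _)
          have hmain : D * μ * V s ^ (μ - 1) ≤ -2 * γ * μ := by
            have h1 : D * (μ * V s ^ (μ - 1)) ≤
                (-2 * γ * V s ^ (1 - μ)) * (μ * V s ^ (μ - 1)) :=
              mul_le_mul_of_nonneg_right hDle hpow
            have h2 : (-2 * γ * V s ^ (1 - μ)) * (μ * V s ^ (μ - 1)) = -2 * γ * μ := by
              have : V s ^ (1 - μ) * V s ^ (μ - 1) = 1 := by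
                rw [← Real.rpow_add hVs]
                norm_num
              nlinarith [this]
            calc D * μ * V s ^ (μ - 1) = D * (μ * V s ^ (μ - 1)) := by ring
              _ ≤ -2 * γ * μ := by rw [← h2]; exact h1
          have : (2 : ℝ) * γ * μ * 1 = 2 * γ * μ := by ring
          linarith [hmain]
      have h := hg (Set.mem_Icc.mpr ⟨le_refl 0, ht0⟩) (Set.mem_Icc.mpr ⟨ht0, le_refl t⟩) ht0
      simp only [mul_zero, add_zero] at h
      linarith
    · -- V t = 0
      rw [← h0, Real.zero_rpow hμ0.ne']
      have : 2 * γ * μ * t ≤ V 0 ^ μ := by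
        rw [le_div_iff₀ h2γμ] at htT
        linarith [htT]
      linarith
  have hT0 : 0 ≤ V 0 ^ μ / (2 * γ * μ) :=
    div_nonneg (Real.rpow_nonneg (hVnonneg 0) μ) h2γμ.le
  constructor
  · exact part1
  · intro t ht
    set T := V 0 ^ μ / (2 * γ * μ) with hTdef
    have hVT : V T = 0 := by
      have h := part1 T hT0 le_rfl
      have h2 : 2 * γ * μ * T = V 0 ^ μ := by
        rw [hTdef, mul_div_cancel₀ _ h2γμ.ne']
      have hle : V T ^ μ ≤ 0 := by linarith
      by_contra hne
      have hp : 0 < V T := (hVnonneg T).lt_of_ne (Ne.symm hne)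
      exact absurd hle (not_le.mpr (Real.rpow_pos_of_pos hp μ))
    have hVt : V t ≤ 0 := hVT ▸ hanti (Set.mem_Ici.mpr hT0) (Set.mem_Ici.mpr (hT0.trans ht)) ht
    exact key (y t) (le_antisymm hVt (hVnonneg t))
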